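/- Let K and X₀ be groups, ∂ : K → X₀ a group homomorphism, and P_K ⊆ K, P₀ ⊆ X₀ submonoids with ∂(P_K) ⊆ P₀. Then the map σ(k,x) = (k⁻¹, ∂(k)·x) on K × X₀ maps P_K × P₀ into P_K × P₀ if and only if P_K is closed under inverses (k⁻¹ ∈ P_K for all k ∈ P_K, i.e. P_K is a subgroup of K). Consequently, a Schreier internal category in right-preordered groups, presented as a semidirect product with positive cone P_K × P₀ and inversion σ, is an internal groupoid exactly when the positive cone P_K of the kernel is a group. -/
import Mathlib

/-- the inversion `σ (k, x) = (k⁻¹, δ k * x)` of a Schreier internal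
category in right-preordered groups is monotone on the product cone `P_K × P₀` if and
only if the kernel cone `P_K` is closed under inverses (i.e. is a group). -/
theorem schreier_groupoid_iff_kernel_cone_group {K X₀ : Type*} [Group K] [Group X₀]
    (δ : K →* X₀) (PK : Submonoid K) (P₀ : Submonoid X₀)
    (hδ : ∀ k ∈ PK, δ k ∈ P₀) :
    Set.MapsTo (fun p : K × X₀ => (p.1⁻¹, δ p.1 * p.2))
      ((PK : Set K) ×ˢ (P₀ : Set X₀)) ((PK : Set K) ×ˢ (P₀ : Set X₀)) ↔
    (∀ k ∈ PK, k⁻¹ ∈ PK) := by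
  constructor
  · intro h k hk
    exact (h (Set.mk_mem_prod hk P₀.one_mem)).1
  · rintro h ⟨k, x⟩ ⟨hk, hx⟩
    exact ⟨h k hk, P₀.mul_mem (hδ k hk) hx⟩
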